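/- Let X be a smooth curve over a complete discretely valued field K with algebraically closed residue field, let 𝔛/R be a strongly semistable regular model with dual graph G, and let ρ : Div(X) → Div(G) be the specialization map. Then for every divisor D on X, r_G(ρ(D)) ≥ r_X(D). -/

import Mathlib

/-- An abstract smooth proper geometrically connected curve over K, presented
through its function field F together with the order-of-vanishing (discrete
valuation) functions at its closed points.  `ratPt` is the set of K-rational
points (the closed points with residue field K, as expressed by the `residue`
axiom). -/
structure AlgCurve (K F : Type) [Field K] [Field F] [Algebra K F] : Type 1 where
  /-- The closed points of the curve. -/
  Point : Type
  /-- The K-rational points X(K). -/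
  ratPt : Set Point
  /-- Order of vanishing at each closed point (an additive valuation). -/
  v : Point → F → WithTop ℤ
  v_zero : ∀ p, v p 0 = ⊤
  v_one : ∀ p, v p 1 = 0
  v_mul : ∀ p (f g : F), v p (f * g) = v p f + v p g
  v_add : ∀ p (f g : F), min (v p f) (v p g) ≤ v p (f + g)
  v_const : ∀ p (c : K), c ≠ 0 → v p (algebraMap K F c) = 0
  v_ne_top : ∀ p (f : F), f ≠ 0 → v p f ≠ ⊤
  v_finite : ∀ f : F, f ≠ 0 → {p | v p f ≠ 0}.Finite
  residue : ∀ p ∈ ratPt, ∀ f : F, v p f = 0 → ∃ c : K, 0 < v p (f - algebraMap K F c)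

/-- Degree of a divisor. -/
def degD {α : Type} (D : α →₀ ℤ) : ℤ := D.sum fun _ n => n

/-- Effectivity of a divisor. -/
def EffD {α : Type} (D : α →₀ ℤ) : Prop := ∀ p, 0 ≤ D p

namespace AlgCurve

variable {K F : Type} [Field K] [Field F] [Algebra K F]

/-- D is the divisor of a nonzero rational function. -/
def IsPrincipal (C : AlgCurve K F) (D : C.Point →₀ ℤ) : Prop :=
  ∃ f : F, f ≠ 0 ∧ ∀ p, C.v p f = (D p : WithTop ℤ)

/-- Linear equivalence of divisors. -/
def LinEq (C : AlgCurve K F) (D D' : C.Point →₀ ℤ) : Prop := C.IsPrincipal (D - D')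

/-- D is linearly equivalent to an effective divisor, i.e. |D| ≠ ∅. -/
def Winnable (C : AlgCurve K F) (D : C.Point →₀ ℤ) : Prop :=
  ∃ E, EffD E ∧ C.LinEq D E

/-- The Baker–Norine style rank of a divisor on the curve: r(D) = -1 if
|D| = ∅, and otherwise the maximal k such that |D - E| ≠ ∅ for every effective
divisor E of degree k supported on K-rational points. -/
noncomputable def rank (C : AlgCurve K F) (D : C.Point →₀ ℤ) : ℤ :=
  sSup (insert (-1) {k : ℤ | 0 ≤ k ∧ ∀ E : C.Point →₀ ℤ,
    EffD E → ↑E.support ⊆ C.ratPt → degD E = k → C.Winnable (D - E)})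

/-- The Riemann–Roch space L(D) = {f : (f) + D ≥ 0} ∪ {0}, a K-subspace of F. -/
def L (C : AlgCurve K F) (D : C.Point →₀ ℤ) : Submodule K F where
  carrier := {f : F | ∀ p, ((-(D p) : ℤ) : WithTop ℤ) ≤ C.v p f}
  zero_mem' := by intro p; rw [C.v_zero]; exact le_top
  add_mem' := by
    intro a b ha hb p
    exact le_trans (le_min (ha p) (hb p)) (C.v_add p a b)
  smul_mem' := by
    intro c f hf
    rcases eq_or_ne c 0 with rfl | hc
    · intro p; rw [zero_smul, C.v_zero]; exact le_top
    · intro p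
      rw [Algebra.smul_def, C.v_mul, C.v_const p c hc, zero_add]
      exact hf p

/-- The dimension of the complete linear system |D|: dim_K L(D) - 1. -/
noncomputable def crank (C : AlgCurve K F) (D : C.Point →₀ ℤ) : ℤ :=
  (Module.finrank K (C.L D) : ℤ) - 1

end AlgCurve

-- my aux lemmas
namespace SpecAux
open Module
variable {K F : Type} [Field K] [Field F] [Algebra K F]

lemma mem_L {C : AlgCurve K F} {D : C.Point →₀ ℤ} {f : F} :
    f ∈ C.L D ↔ ∀ p, ((-(D p) : ℤ) : WithTop ℤ) ≤ C.v p f := Iff.rfl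

lemma v_exists (C : AlgCurve K F) (p : C.Point) {f : F} (hf : f ≠ 0) :
    ∃ n : ℤ, C.v p f = (n : WithTop ℤ) := by
  rcases WithTop.ne_top_iff_exists.1 (C.v_ne_top p f hf) with ⟨n, hn⟩
  exact ⟨n, hn.symm⟩

lemma v_inv (C : AlgCurve K F) (p : C.Point) {f : F} (hf : f ≠ 0) {n : ℤ}
    (h : C.v p f = (n : WithTop ℤ)) : C.v p f⁻¹ = ((-n : ℤ) : WithTop ℤ) := by
  have h1 : C.v p (f * f⁻¹) = 0 := by rw [mul_inv_cancel₀ hf, C.v_one]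
  rw [C.v_mul, h] at h1
  rcases v_exists C p (inv_ne_zero hf) with ⟨m, hm⟩
  rw [hm] at h1 ⊢
  rw [← WithTop.coe_add] at h1
  have : n + m = 0 := by exact_mod_cast h1
  norm_cast
  omega

noncomputable def divOf (C : AlgCurve K F) (f : F) (hf : f ≠ 0) : C.Point →₀ ℤ :=
  Finsupp.ofSupportFinite (fun p => WithTop.untopD 0 (C.v p f))
    (Set.Finite.subset (C.v_finite f hf) (by
      intro p hp
      simp only [Function.mem_support] at hp
      simp only [Set.mem_setOf_eq]
      intro h0
      apply hp
      rw [h0]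
      rfl))

lemma divOf_spec (C : AlgCurve K F) (f : F) (hf : f ≠ 0) (p : C.Point) :
    C.v p f = ((divOf C f hf p : ℤ) : WithTop ℤ) := by
  rcases v_exists C p hf with ⟨n, hn⟩
  rw [hn]
  have : divOf C f hf p = n := by
    show WithTop.untopD 0 (C.v p f) = n
    rw [hn, WithTop.untopD_coe]
  rw [this]

lemma winnable_of_mem_L (C : AlgCurve K F) {D : C.Point →₀ ℤ} {f : F} (hf : f ≠ 0)
    (hfL : f ∈ C.L D) : C.Winnable D := by
  refine ⟨D + divOf C f hf, ?_, ?_⟩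
  · intro q
    have h1 := hfL q
    rw [divOf_spec C f hf q, WithTop.coe_le_coe] at h1
    rw [Finsupp.add_apply]
    omega
  · refine ⟨f⁻¹, inv_ne_zero hf, ?_⟩
    intro q
    have h2 := v_inv C q hf (divOf_spec C f hf q)
    rw [h2]
    norm_cast
    simp [Finsupp.sub_apply, Finsupp.add_apply]

lemma degD_sub {α : Type} (A B : α →₀ ℤ) : degD (A - B) = degD A - degD B :=
  Finsupp.sum_sub_index (fun _ _ _ => rfl)

lemma degD_single {α : Type} (p : α) (n : ℤ) : degD (Finsupp.single p n) = n :=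
  Finsupp.sum_single_index rfl

lemma eff_deg_zero {α : Type} {E : α →₀ ℤ} (hE : EffD E) (h : degD E = 0) : E = 0 := by
  have h2 : ∀ q ∈ E.support, E q = 0 := by
    rw [degD, Finsupp.sum, Finset.sum_eq_zero_iff_of_nonneg (fun q _ => hE q)] at h
    exact h
  ext q
  by_cases hq : q ∈ E.support
  · exact h2 q hq
  · simpa using Finsupp.notMem_support_iff.1 hq

lemma exact_val (C : AlgCurve K F) {D : C.Point →₀ ℤ} {p : C.Point} {f : F}
    (hfM : f ∈ C.L D) (hfW : f ∉ C.L (D - Finsupp.single p 1)) :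
    C.v p f = ((-(D p) : ℤ) : WithTop ℤ) := by
  classical
  rw [mem_L] at hfW
  push_neg at hfW
  obtain ⟨q, hq⟩ := hfW
  have hDq : (D - Finsupp.single p 1 : C.Point →₀ ℤ) q = D q - (if p = q then 1 else 0) := by
    rw [Finsupp.sub_apply, Finsupp.single_apply]
  by_cases hqp : p = q
  · subst hqp
    rw [if_pos rfl] at hDq
    rw [hDq] at hq
    have hlt := hq
    have hne : C.v p f ≠ ⊤ := ne_top_of_lt hlt
    obtain ⟨k, hk⟩ := WithTop.ne_top_iff_exists.1 hne
    have h1 := hfM p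
    rw [← hk, WithTop.coe_le_coe] at h1
    rw [← hk, WithTop.coe_lt_coe] at hlt
    rw [← hk, WithTop.coe_eq_coe]
    omega
  · exfalso
    rw [hDq, if_neg hqp, sub_zero] at hq
    exact absurd (hfM q) (not_le.2 hq)

lemma L_mono_single (C : AlgCurve K F) (D : C.Point →₀ ℤ) (p : C.Point) :
    C.L (D - Finsupp.single p 1) ≤ C.L D := by
  classical
  intro f hf q
  refine le_trans ?_ (hf q)
  rw [WithTop.coe_le_coe, Finsupp.sub_apply, Finsupp.single_apply]
  split_ifs <;> omega

lemma one_le_of_pos {x : WithTop ℤ} (hx : 0 < x) : 1 ≤ x := by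
  rcases eq_or_ne x ⊤ with rfl | h
  · exact le_top
  · obtain ⟨k, hk⟩ := WithTop.ne_top_iff_exists.1 h
    rw [← hk] at hx ⊢
    exact_mod_cast hx

lemma finrank_L_drop (C : AlgCurve K F) (hfd : ∀ D : C.Point →₀ ℤ, FiniteDimensional K (C.L D))
    {D : C.Point →₀ ℤ} {p : C.Point} (hp : p ∈ C.ratPt) :
    finrank K (C.L D) ≤ finrank K (C.L (D - Finsupp.single p 1)) + 1 := by
  classical
  set W := C.L (D - Finsupp.single p 1) with hW
  set M := C.L D with hM
  have hWM : W ≤ M := L_mono_single C D p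
  haveI := hfd D
  set W' := W.comap M.subtype with hW'
  have hrk : finrank K (M ⧸ W') + finrank K W' = finrank K M :=
    Submodule.finrank_quotient_add_finrank W'
  have hW'W : finrank K W' = finrank K W :=
    (Submodule.comapSubtypeEquivOfLe hWM).finrank_eq
  have hq : finrank K (M ⧸ W') ≤ 1 := by
    by_cases hg : ∃ g, g ∈ M ∧ g ∉ W
    · obtain ⟨g, hgM, hgW⟩ := hg
      have hgv : C.v p g = ((-(D p) : ℤ) : WithTop ℤ) := exact_val C hgM hgW
      have hg0 : g ≠ 0 := by
        intro h0
        rw [h0, C.v_zero] at hgv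
        exact (WithTop.coe_ne_top hgv.symm).elim
      apply finrank_le_one (Submodule.Quotient.mk (⟨g, hgM⟩ : M))
      intro x
      obtain ⟨f, rfl⟩ := Submodule.Quotient.mk_surjective _ x
      by_cases hfW : (f : F) ∈ W
      · refine ⟨0, ?_⟩
        rw [zero_smul, eq_comm, Submodule.Quotient.mk_eq_zero]
        exact hfW
      · have hfv : C.v p (f : F) = ((-(D p) : ℤ) : WithTop ℤ) := exact_val C f.2 hfW
        have hf0 : (f : F) ≠ 0 := by
          intro h0
          rw [h0, C.v_zero] at hfv
          exact (WithTop.coe_ne_top hfv.symm).elim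
        have hginv : C.v p g⁻¹ = ((D p : ℤ) : WithTop ℤ) := by
          have := v_inv C p hg0 hgv
          simpa using this
        have hh : C.v p ((f : F) * g⁻¹) = 0 := by
          rw [C.v_mul, hfv, hginv, ← WithTop.coe_add]
          norm_num
        obtain ⟨c, hc⟩ := C.residue p hp _ hh
        have hmem : (f : F) - c • g ∈ W := by
          intro q
          by_cases hqp : p = q
          · subst hqp
            have hfact : (f : F) - c • g = g * ((f : F) * g⁻¹ - algebraMap K F c) := by
              field_simp [Algebra.smul_def]
              rw [Algebra.smul_def]; ring
            rw [hfact, C.v_mul, hgv]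
            have h1 : (1 : WithTop ℤ) ≤ C.v p ((f : F) * g⁻¹ - algebraMap K F c) :=
              one_le_of_pos hc
            have hDp : (D - Finsupp.single p 1 : C.Point →₀ ℤ) p = D p - 1 := by
              rw [Finsupp.sub_apply, Finsupp.single_apply, if_pos rfl]
            rw [hDp]
            calc ((-(D p - 1) : ℤ) : WithTop ℤ) = ((-(D p) : ℤ) : WithTop ℤ) + 1 := by
                  push_cast; norm_cast; omega
              _ ≤ ((-(D p) : ℤ) : WithTop ℤ) + C.v p ((f : F) * g⁻¹ - algebraMap K F c) := by
                  exact add_le_add_right h1 _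
          · have hDq : (D - Finsupp.single p 1 : C.Point →₀ ℤ) q = D q := by
              rw [Finsupp.sub_apply, Finsupp.single_apply, if_neg hqp, sub_zero]
            rw [hDq]
            rcases eq_or_ne c 0 with rfl | hc0
            · rw [zero_smul, sub_zero]
              exact f.2 q
            · have heq : (f : F) - c • g = (f : F) + (-c) • g := by
                rw [neg_smul, ← sub_eq_add_neg]
              rw [heq]
              refine le_trans ?_ (C.v_add q _ _)
              refine le_min (f.2 q) ?_
              rw [Algebra.smul_def, C.v_mul, C.v_const q (-c) (neg_ne_zero.2 hc0), zero_add]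
              exact hgM q
        refine ⟨c, ?_⟩
        rw [← Submodule.Quotient.mk_smul, eq_comm, ← sub_eq_zero,
          ← Submodule.Quotient.mk_sub, Submodule.Quotient.mk_eq_zero]
        show ((f - c • ⟨g, hgM⟩ : M) : F) ∈ W
        simpa using hmem
    · push_neg at hg
      have htop : W' = ⊤ := by
        rw [eq_top_iff]
        intro x _
        exact hg x.1 x.2
      haveI : Subsingleton (M ⧸ W') := Submodule.Quotient.subsingleton_iff.2 htop
      rw [finrank_zero_of_subsingleton]
      norm_num
  omega

lemma finrank_L_sub_le (C : AlgCurve K F)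
    (hfd : ∀ D : C.Point →₀ ℤ, FiniteDimensional K (C.L D)) :
    ∀ n : ℕ, ∀ D E : C.Point →₀ ℤ, EffD E → ↑E.support ⊆ C.ratPt → degD E = n →
    (finrank K (C.L D) : ℤ) ≤ (finrank K (C.L (D - E)) : ℤ) + n := by
  intro n
  induction n with
  | zero =>
    intro D E hE hs h0
    have : E = 0 := eff_deg_zero hE (by exact_mod_cast h0)
    subst this
    rw [sub_zero]
    simp
  | succ n ih =>
    classical
    intro D E hE hs hdegE
    have hne : E.support.Nonempty := by
      rcases E.support.eq_empty_or_nonempty with h | h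
      · exfalso
        have : E = 0 := Finsupp.support_eq_empty.1 h
        subst this
        simp [degD] at hdegE
        exact_mod_cast hdegE
      · exact h
    obtain ⟨p, hp⟩ := hne
    have hpR : p ∈ C.ratPt := hs hp
    have hp1 : 1 ≤ E p := by
      have := hE p
      have h2 := Finsupp.mem_support_iff.1 hp
      omega
    set E' := E - Finsupp.single p 1 with hE'def
    have hE'eff : EffD E' := by
      intro q
      rw [hE'def, Finsupp.sub_apply, Finsupp.single_apply]
      split_ifs with h
      · subst h; omega
      · have := hE q; omega
    have hs' : ↑E'.support ⊆ C.ratPt := by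
      intro q hq
      rcases Finset.mem_union.1 (Finsupp.support_sub hq) with h | h
      · exact hs h
      · have : q = p := by
          have := Finsupp.support_single_subset h
          simpa using this
        subst this
        exact hpR
    have hdeg' : degD E' = n := by
      rw [hE'def, degD_sub, degD_single, hdegE]
      push_cast
      ring
    have h1 := ih D E' hE'eff hs' hdeg'
    have h2 := finrank_L_drop C hfd (D := D - E') hpR
    have h3 : D - E' - Finsupp.single p 1 = D - E := by
      rw [hE'def]
      abel
    rw [h3] at h2
    push_cast
    push_cast at h1
    omega

lemma exists_ne_zero_of_finrank_pos {C : AlgCurve K F} {D : C.Point →₀ ℤ}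
    (h : 0 < finrank K (C.L D)) : ∃ f ∈ C.L D, f ≠ 0 := by
  rw [← Submodule.ne_bot_iff]
  intro hbot
  rw [hbot] at h
  simp [finrank_bot] at h

end SpecAux



open Finset

structure Multigraph (V : Type) [Fintype V] [DecidableEq V] : Type where
  mult : V → V → ℕ
  symm : ∀ u v : V, mult u v = mult v u
  loopless : ∀ v : V, mult v v = 0
  connected : ∀ u v : V, Relation.ReflTransGen (fun a b => 0 < mult a b) u v

def divDeg {V : Type} [Fintype V] (D : V → ℤ) : ℤ := ∑ v, D v

def Effective {V : Type} (D : V → ℤ) : Prop := ∀ v, 0 ≤ D v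

namespace Multigraph

variable {V : Type} [Fintype V] [DecidableEq V]

def degree (G : Multigraph V) (v : V) : ℕ := ∑ w, G.mult v w

def edgeCount (G : Multigraph V) : ℕ := (∑ v, G.degree v) / 2

def genus (G : Multigraph V) : ℤ := (G.edgeCount : ℤ) - (Fintype.card V : ℤ) + 1

def laplacian (G : Multigraph V) (f : V → ℤ) : V → ℤ :=
  fun v => ∑ w, (G.mult v w : ℤ) * (f v - f w)

def Principal (G : Multigraph V) (D : V → ℤ) : Prop := ∃ f : V → ℤ, D = G.laplacian f

def Winnable (G : Multigraph V) (D : V → ℤ) : Prop :=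
  ∃ E : V → ℤ, Effective E ∧ G.Principal (D - E)

noncomputable def rank (G : Multigraph V) (D : V → ℤ) : ℤ :=
  sSup (insert (-1) {k : ℤ | 0 ≤ k ∧ ∀ E : V → ℤ, Effective E → divDeg E = k →
    G.Winnable (D - E)})

end Multigraph

lemma SpecAux.lap_deg_zero {V : Type} [Fintype V] [DecidableEq V] (G : Multigraph V)
    (f : V → ℤ) : divDeg (G.laplacian f) = 0 := by
  have key : (∑ v, ∑ w, (G.mult v w : ℤ) * (f v - f w))
      = ∑ v, ∑ w, (G.mult v w : ℤ) * (f w - f v) := by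
    rw [Finset.sum_comm]
    refine Finset.sum_congr rfl fun x _ => Finset.sum_congr rfl fun y _ => ?_
    rw [G.symm]
  have h3 : (∑ v, ∑ w, (G.mult v w : ℤ) * (f w - f v))
      = -∑ v, ∑ w, (G.mult v w : ℤ) * (f v - f w) := by
    rw [← Finset.sum_neg_distrib]
    refine Finset.sum_congr rfl fun x _ => ?_
    rw [← Finset.sum_neg_distrib]
    refine Finset.sum_congr rfl fun y _ => ?_
    ring
  have h2 : divDeg (G.laplacian f) = ∑ v, ∑ w, (G.mult v w : ℤ) * (f v - f w) := rfl
  rw [h2]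
  omega

lemma SpecAux.divDeg_sub {V : Type} [Fintype V] (A B : V → ℤ) :
    divDeg (A - B) = divDeg A - divDeg B := by
  unfold divDeg
  rw [← Finset.sum_sub_distrib]
  rfl

open Finset in
/-- The Specialization Lemma: let X be a smooth curve over the fraction field K
of a complete DVR with algebraically closed residue field, 𝔛/R a strongly
semistable regular model with dual graph G, and ρ : Div(X) → Div(G) the
specialization map (a degree-preserving homomorphism taking effective divisors
to effective divisors and principal divisors to principal divisors, whose
restriction to X(K) surjects onto V(G)).  Then r_G(ρ(D)) ≥ r_X(D) for every
divisor D on X. -/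
theorem specialization_lemma {K F : Type} [Field K] [Field F] [Algebra K F]
    {V : Type} [Fintype V] [DecidableEq V]
    (C : AlgCurve K F) (G : Multigraph V)
    (hinf : C.ratPt.Infinite)
    (hfd : ∀ D : C.Point →₀ ℤ, FiniteDimensional K (C.L D))
    (ρ : (C.Point →₀ ℤ) →+ (V → ℤ))
    (hdeg : ∀ D : C.Point →₀ ℤ, divDeg (ρ D) = degD D)
    (heff : ∀ D : C.Point →₀ ℤ, EffD D → Effective (ρ D))
    (hprin : ∀ D : C.Point →₀ ℤ, C.IsPrincipal D → G.Principal (ρ D))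
    (hsurj : ∀ w : V, ∃ P ∈ C.ratPt,
      ρ (Finsupp.single P 1) = fun u => if u = w then 1 else 0) :
    ∀ D : C.Point →₀ ℤ, C.crank D ≤ G.rank (ρ D) := by
  classical
  intro D
  -- V is nonempty
  have hV : Nonempty V := by
    by_contra h
    rw [not_nonempty_iff] at h
    obtain ⟨P, _⟩ := hinf.nonempty
    have h1 := hdeg (Finsupp.single P 1)
    have h2 : divDeg (ρ (Finsupp.single P 1)) = 0 := by
      unfold divDeg
      rw [Finset.univ_eq_empty, Finset.sum_empty]
    rw [h2, SpecAux.degD_single] at h1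
    exact one_ne_zero h1.symm
  obtain ⟨v0⟩ := hV
  set S : Set ℤ := insert (-1) {k : ℤ | 0 ≤ k ∧ ∀ E : V → ℤ, Effective E → divDeg E = k →
    G.Winnable (ρ D - E)} with hS
  have hbdd : BddAbove S := by
    refine ⟨max (degD D) (-1), ?_⟩
    rintro k (rfl | ⟨hk0, hk⟩)
    · exact le_max_right _ _
    · refine le_trans ?_ (le_max_left _ _)
      set E : V → ℤ := fun v => if v = v0 then k else 0 with hE
      have hEeff : Effective E := by
        intro v
        rw [hE]
        dsimp only
        split_ifs <;> omega
      have hEdeg : divDeg E = k := by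
        unfold divDeg
        rw [hE]
        rw [Finset.sum_ite_eq' Finset.univ v0 (fun _ => k)]
        simp
      obtain ⟨E2, hE2, g, hg⟩ := hk E hEeff hEdeg
      have h0 := SpecAux.lap_deg_zero G g
      rw [← hg] at h0
      rw [SpecAux.divDeg_sub, SpecAux.divDeg_sub, hdeg D, hEdeg] at h0
      have hE2d : 0 ≤ divDeg E2 := Finset.sum_nonneg fun v _ => hE2 v
      omega
  rcases Nat.eq_zero_or_pos (Module.finrank K (C.L D)) with h0 | hpos
  · have hcr : C.crank D = -1 := by
      unfold AlgCurve.crank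
      rw [h0]
      ring
    rw [hcr]
    exact le_csSup hbdd (Set.mem_insert _ _)
  · set k : ℤ := (Module.finrank K (C.L D) : ℤ) - 1 with hk
    have hcr : C.crank D = k := rfl
    have hk0 : 0 ≤ k := by
      rw [hk]
      omega
    rw [hcr]
    refine le_csSup hbdd (Set.mem_insert_of_mem _ ⟨hk0, ?_⟩)
    intro E' hE'eff hE'deg
    -- lift E' to the curve
    choose P hPrat hPρ using hsurj
    set E : C.Point →₀ ℤ := ∑ w, Finsupp.single (P w) (E' w) with hEdef
    have hsingle : ∀ w : V, Finsupp.single (P w) (E' w) = (E' w) • Finsupp.single (P w) (1 : ℤ) := by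
      intro w
      rw [Finsupp.smul_single, smul_eq_mul, mul_one]
    have hρE : ρ E = E' := by
      rw [hEdef, map_sum]
      funext u
      rw [Finset.sum_apply]
      have : ∀ w : V, (ρ (Finsupp.single (P w) (E' w))) u = if u = w then E' w else 0 := by
        intro w
        rw [hsingle w, map_zsmul, hPρ w]
        simp only [Pi.smul_apply, smul_eq_mul]
        split_ifs <;> ring
      rw [Finset.sum_congr rfl fun w _ => this w]
      rw [Finset.sum_ite_eq Finset.univ u (fun w => E' w)]
      simp
    have hEeff : EffD E := by
      intro q
      rw [hEdef, Finsupp.finset_sum_apply]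
      refine Finset.sum_nonneg fun w _ => ?_
      rw [Finsupp.single_apply]
      split_ifs
      · exact hE'eff w
      · exact le_refl 0
    have hEsupp : ↑E.support ⊆ C.ratPt := by
      intro q hq
      rw [hEdef] at hq
      have hq2 := Finsupp.support_finset_sum (Finset.mem_coe.1 hq)
      obtain ⟨w, _, hw⟩ := Finset.mem_biUnion.1 hq2
      have := Finsupp.support_single_subset hw
      rw [Finset.mem_singleton] at this
      rw [this]
      exact hPrat w
    have hEdeg : degD E = k := by
      rw [← hdeg E, hρE, hE'deg]
    -- dimension count
    have hcount := SpecAux.finrank_L_sub_le C hfd k.toNat D E hEeff hEsupp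
      (by rw [hEdeg, Int.toNat_of_nonneg hk0])
    rw [Int.toNat_of_nonneg hk0] at hcount
    have hpos2 : 0 < Module.finrank K (C.L (D - E)) := by
      rw [hk] at hcount
      omega
    obtain ⟨f, hfL, hf0⟩ := SpecAux.exists_ne_zero_of_finrank_pos hpos2
    obtain ⟨E2, hE2eff, hE2prin⟩ := SpecAux.winnable_of_mem_L C hf0 hfL
    refine ⟨ρ E2, heff E2 hE2eff, ?_⟩
    have := hprin _ hE2prin
    have heq : ρ (D - E - E2) = ρ D - E' - ρ E2 := by
      rw [map_sub, map_sub, hρE]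
    rw [heq] at this
    exact this
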